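/- If two lattices L₁, L₂ ⊂ ℝᵈ are NOT incommensurate (i.e., commensurate), then there exist nonzero reciprocal lattice vectors G₁ ∈ L₁* and G₂ ∈ L₂* such that G₁ + G₂ = 0; equivalently, L₁* ∩ L₂* contains a nonzero vector. -/

import Mathlib

/-- The reciprocal lattice `{2π A⁻ᵀ n : n ∈ ℤᵈ}` of the Bravais lattice `A ℤᵈ`. -/
def recLat {d : ℕ} (A : Matrix (Fin d) (Fin d) ℝ) : Set (Fin d → ℝ) :=
  {x | ∃ n : Fin d → ℤ, x = (2 * Real.pi) • (A⁻¹).transpose.mulVec (fun i => (n i : ℝ))}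

/-- Two lattices `A₁ℤᵈ`, `A₂ℤᵈ` are incommensurate if the only translation preserving the
union of their reciprocal lattices is zero. -/
def Incommensurate {d : ℕ} (A₁ A₂ : Matrix (Fin d) (Fin d) ℝ) : Prop :=
  ∀ τ : Fin d → ℝ,
    Set.image (fun x => x + τ) (recLat A₁ ∪ recLat A₂) = recLat A₁ ∪ recLat A₂ → τ = 0

lemma recLat_zero {d : ℕ} (A : Matrix (Fin d) (Fin d) ℝ) : (0 : Fin d → ℝ) ∈ recLat A := by
  refine ⟨0, ?_⟩
  have : (fun i : Fin d => (((0 : Fin d → ℤ) i : ℝ))) = 0 := by funext i; simp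
  rw [this, Matrix.mulVec_zero, smul_zero]

lemma recLat_sub {d : ℕ} {A : Matrix (Fin d) (Fin d) ℝ} {x y : Fin d → ℝ}
    (hx : x ∈ recLat A) (hy : y ∈ recLat A) : x - y ∈ recLat A := by
  obtain ⟨n, rfl⟩ := hx
  obtain ⟨m, rfl⟩ := hy
  refine ⟨n - m, ?_⟩
  have : (fun i => ((n - m) i : ℝ)) = (fun i => (n i : ℝ)) - (fun i => (m i : ℝ)) := by
    funext i; simp
  rw [this, Matrix.mulVec_sub, smul_sub]

lemma recLat_basis_ne_zero {d : ℕ} {A : Matrix (Fin d) (Fin d) ℝ} (h : IsUnit A.det)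
    (i₀ : Fin d) :
    (2 * Real.pi) • (A⁻¹).transpose.mulVec
      (fun i => ((Pi.single i₀ 1 : Fin d → ℤ) i : ℝ)) ≠ 0 := by
  intro hz
  have h2π : (2 * Real.pi) ≠ 0 := by positivity
  have hmv : (A⁻¹).transpose.mulVec (fun i => ((Pi.single i₀ 1 : Fin d → ℤ) i : ℝ)) = 0 := by
    have := smul_eq_zero.mp hz
    tauto
  have := congrArg (A.transpose.mulVec) hmv
  rw [Matrix.mulVec_mulVec, ← Matrix.transpose_mul, Matrix.nonsing_inv_mul _ h,
    Matrix.transpose_one, Matrix.one_mulVec, Matrix.mulVec_zero] at this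
  have := congrFun this i₀
  simp at this

/-- if two lattices are not incommensurate, then there are nonzero reciprocal
lattice vectors `G₁ ∈ L₁*`, `G₂ ∈ L₂*` with `G₁ + G₂ = 0`; equivalently `L₁* ∩ L₂*`
contains a nonzero vector. -/
theorem commensurate_gives_nonzero_intersection {d : ℕ}
    (A₁ A₂ : Matrix (Fin d) (Fin d) ℝ) (h₁ : IsUnit A₁.det) (h₂ : IsUnit A₂.det)
    (hcom : ¬ Incommensurate A₁ A₂) :
    (∃ G₁ G₂ : Fin d → ℝ, G₁ ∈ recLat A₁ ∧ G₂ ∈ recLat A₂ ∧ G₁ ≠ 0 ∧ G₂ ≠ 0 ∧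
        G₁ + G₂ = 0) ∧
    ∃ G : Fin d → ℝ, G ∈ recLat A₁ ∩ recLat A₂ ∧ G ≠ 0 := by
  rw [Incommensurate] at hcom
  push_neg at hcom
  obtain ⟨τ, hS, hτ⟩ := hcom
  -- forward closure
  have hfwd : ∀ x ∈ recLat A₁ ∪ recLat A₂, x + τ ∈ recLat A₁ ∪ recLat A₂ := by
    intro x hx
    rw [← hS]
    exact ⟨x, hx, rfl⟩
  have hτmem : τ ∈ recLat A₁ ∪ recLat A₂ := by
    have := hfwd 0 (Or.inl (recLat_zero A₁))
    simpa using this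
  -- key: from a nonzero vector in the intersection, conclude
  have key : ∀ G : Fin d → ℝ, G ∈ recLat A₁ → G ∈ recLat A₂ → G ≠ 0 →
      (∃ G₁ G₂ : Fin d → ℝ, G₁ ∈ recLat A₁ ∧ G₂ ∈ recLat A₂ ∧ G₁ ≠ 0 ∧ G₂ ≠ 0 ∧
        G₁ + G₂ = 0) ∧
      ∃ G : Fin d → ℝ, G ∈ recLat A₁ ∩ recLat A₂ ∧ G ≠ 0 := by
    intro G hG1 hG2 hG0
    refine ⟨⟨G, -G, hG1, ?_, hG0, neg_ne_zero.mpr hG0, by ring⟩, G, ⟨hG1, hG2⟩, hG0⟩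
    have := recLat_sub (recLat_zero A₂) hG2
    simpa using this
  -- Fin d is nonempty since τ ≠ 0
  have hne : ∃ i₀ : Fin d, True := by
    by_contra h
    push_neg at h
    exact hτ (funext fun i => (h i).elim)
  obtain ⟨i₀, -⟩ := hne
  by_cases hτ1 : τ ∈ recLat A₁
  · by_cases hτ2 : τ ∈ recLat A₂
    · exact key τ hτ1 hτ2 hτ
    · -- L₂* ⊆ L₁*
      have hsub : recLat A₂ ⊆ recLat A₁ := by
        intro g hg
        have hgτ := hfwd g (Or.inr hg)
        rcases hgτ with h | h
        · have : g + τ - τ = g := by ring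
          have := recLat_sub h hτ1
          rwa [show g + τ - τ = g by ring] at this
        · exfalso; apply hτ2
          have := recLat_sub h hg
          rwa [show g + τ - g = τ by ring] at this
      set v := (2 * Real.pi) • (A₂⁻¹).transpose.mulVec
        (fun i => ((Pi.single i₀ 1 : Fin d → ℤ) i : ℝ)) with hv
      have hv2 : v ∈ recLat A₂ := ⟨Pi.single i₀ 1, rfl⟩
      exact key v (hsub hv2) hv2 (recLat_basis_ne_zero h₂ i₀)
  · have hτ2 : τ ∈ recLat A₂ := hτmem.resolve_left hτ1
    have hsub : recLat A₁ ⊆ recLat A₂ := by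
      intro g hg
      have hgτ := hfwd g (Or.inl hg)
      rcases hgτ with h | h
      · exfalso; apply hτ1
        have := recLat_sub h hg
        rwa [show g + τ - g = τ by ring] at this
      · have := recLat_sub h hτ2
        rwa [show g + τ - τ = g by ring] at this
    set v := (2 * Real.pi) • (A₁⁻¹).transpose.mulVec
      (fun i => ((Pi.single i₀ 1 : Fin d → ℤ) i : ℝ)) with hv
    have hv1 : v ∈ recLat A₁ := ⟨Pi.single i₀ 1, rfl⟩
    exact key v hv1 (hsub hv1) (recLat_basis_ne_zero h₁ i₀)
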